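/- For every even integer n ≥ 14, there exists a (3, 6) Hamiltonian bipartite graph of order n; that is, a simple graph on Fin n that is 3-regular, bipartite, contains a Hamiltonian cycle, and has girth 6. -/

import Mathlib

/-- A `(3, g)` Hamiltonian bipartite graph of order `n`: a simple graph on `Fin n` that is
3-regular (every vertex has exactly 3 neighbours), bipartite (2-colorable), contains a
Hamiltonian cycle, and has girth `g` (as the infimum in `ℕ∞` of its cycle lengths). -/
def IsHamBipartite3 (n g : ℕ) (G : SimpleGraph (Fin n)) : Prop :=
  (∀ v, {w | G.Adj v w}.ncard = 3) ∧
  G.Colorable 2 ∧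
  (∃ (v : Fin n) (c : G.Walk v v), c.IsHamiltonianCycle) ∧
  G.egirth = (g : ℕ∞)

namespace HamB3
open SimpleGraph

variable {N : ℕ}

lemma no_small (hN : 14 ≤ N) {k : ℕ} (h0 : 0 < k) (hk : k < N) (h : (k : ZMod N) = 0) :
    False := by
  rw [ZMod.natCast_eq_zero_iff] at h
  have := Nat.le_of_dvd h0 h
  omega

lemma cast_inj (hN : 14 ≤ N) {a b : ℕ} (ha : a < N) (hb : b < N)
    (h : (a : ZMod N) = (b : ZMod N)) : a = b := by
  rw [ZMod.natCast_eq_natCast_iff'] at h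
  rwa [Nat.mod_eq_of_lt ha, Nat.mod_eq_of_lt hb] at h

lemma even_mod (hE : Even N) (a : ℕ) : Even (a % N) ↔ Even a := by
  rw [Nat.even_iff, Nat.even_iff, Nat.mod_mod_of_dvd a hE.two_dvd]

lemma pflip1 (hN : 14 ≤ N) (hE : Even N) (x : ZMod N) :
    Even (x + 1).val ↔ ¬ Even x.val := by
  haveI : NeZero N := ⟨by omega⟩
  haveI : Fact (1 < N) := ⟨by omega⟩
  rw [ZMod.val_add, ZMod.val_one, even_mod hE]
  simp [Nat.even_add_one]

lemma pflip5 (hN : 14 ≤ N) (hE : Even N) (x : ZMod N) :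
    Even (x + 5).val ↔ ¬ Even x.val := by
  haveI : NeZero N := ⟨by omega⟩
  have h5 : ((5 : ZMod N)).val = 5 := by
    have h : ((5 : ℕ) : ZMod N) = (5 : ZMod N) := by push_cast; ring
    rw [← h, ZMod.val_cast_of_lt (by omega)]
  rw [ZMod.val_add, h5, even_mod hE]
  rw [Nat.even_iff, Nat.even_iff]
  omega

def Adjacent (N : ℕ) (x y : ZMod N) : Prop :=
  y = x + 1 ∨ x = y + 1 ∨ (Even x.val ∧ y = x + 5) ∨ (Even y.val ∧ x = y + 5)

def graph (N : ℕ) (hN : 14 ≤ N) : SimpleGraph (ZMod N) where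
  Adj := Adjacent N
  symm := by
    constructor
    intro x y h
    unfold Adjacent at h ⊢
    tauto
  loopless := by
    constructor
    intro x h
    rcases h with h | h | ⟨-, h⟩ | ⟨-, h⟩
    · exact no_small hN (k := 1) (by omega) (by omega) (by push_cast; linear_combination -h)
    · exact no_small hN (k := 1) (by omega) (by omega) (by push_cast; linear_combination -h)
    · exact no_small hN (k := 5) (by omega) (by omega) (by push_cast; linear_combination -h)
    · exact no_small hN (k := 5) (by omega) (by omega) (by push_cast; linear_combination -h)

lemma adj_parity (hN : 14 ≤ N) (hE : Even N) {x y : ZMod N} (h : Adjacent N x y) :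
    Even y.val ↔ ¬ Even x.val := by
  rcases h with rfl | h | ⟨-, rfl⟩ | ⟨he, h⟩
  · exact pflip1 hN hE x
  · rw [h, pflip1 hN hE y]; tauto
  · exact pflip5 hN hE x
  · rw [h, pflip5 hN hE y] ; tauto

lemma step (hN : 14 ≤ N) (hE : Even N) {x y : ZMod N} (h : Adjacent N x y) :
    ∃ k : ℤ, y = x + (k : ZMod N) ∧ (k = 1 ∨ k = -1 ∨ k = 5 ∨ k = -5) ∧
      (k = 5 → Even x.val) ∧ (k = -5 → ¬ Even x.val) := by
  rcases h with rfl | h | ⟨he, rfl⟩ | ⟨he, h⟩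
  · exact ⟨1, by push_cast; ring, Or.inl rfl, by omega, by omega⟩
  · exact ⟨-1, by push_cast; linear_combination -h, Or.inr (Or.inl rfl), by omega, by omega⟩
  · exact ⟨5, by push_cast; ring, Or.inr (Or.inr (Or.inl rfl)), fun _ => he, by omega⟩
  · refine ⟨-5, by push_cast; linear_combination -h, Or.inr (Or.inr (Or.inr rfl)), by omega,
      fun _ hx => ?_⟩
    rw [h, pflip5 hN hE y] at hx
    exact hx he

lemma degree (hN : 14 ≤ N) (hE : Even N) (x : ZMod N) :
    {w | (graph N hN).Adj x w}.ncard = 3 := by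
  by_cases hx : Even x.val
  · have hset : {w | (graph N hN).Adj x w} = {x + 1, x - 1, x + 5} := by
      ext w
      simp only [Set.mem_setOf_eq, Set.mem_insert_iff, Set.mem_singleton_iff]
      constructor
      · rintro (h | h | ⟨-, h⟩ | ⟨hw, h⟩)
        · exact Or.inl h
        · exact Or.inr (Or.inl (by rw [h]; ring))
        · exact Or.inr (Or.inr h)
        · exfalso
          rw [h, pflip5 hN hE w] at hx
          exact hx hw
      · rintro (h | h | h)
        · exact Or.inl h
        · exact Or.inr (Or.inl (by rw [h]; ring))
        · exact Or.inr (Or.inr (Or.inl ⟨hx, h⟩))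
    rw [hset]
    rw [Set.ncard_eq_three]
    refine ⟨_, _, _, ?_, ?_, ?_, rfl⟩
    · intro h
      exact no_small hN (k := 2) (by omega) (by omega) (by push_cast; linear_combination h)
    · intro h
      exact no_small hN (k := 4) (by omega) (by omega) (by push_cast; linear_combination -h)
    · intro h
      exact no_small hN (k := 6) (by omega) (by omega) (by push_cast; linear_combination -h)
  · have hset : {w | (graph N hN).Adj x w} = {x + 1, x - 1, x - 5} := by
      ext w
      simp only [Set.mem_setOf_eq, Set.mem_insert_iff, Set.mem_singleton_iff]
      constructor
      · rintro (h | h | ⟨hx', h⟩ | ⟨hw, h⟩)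
        · exact Or.inl h
        · exact Or.inr (Or.inl (by rw [h]; ring))
        · exact absurd hx' hx
        · exact Or.inr (Or.inr (by rw [h]; ring))
      · rintro (h | h | h)
        · exact Or.inl h
        · exact Or.inr (Or.inl (by rw [h]; ring))
        · refine Or.inr (Or.inr (Or.inr ⟨?_, by rw [h]; ring⟩))
          have h5 := pflip5 hN hE (x - 5)
          have hx5 : x - 5 + 5 = x := by ring
          rw [hx5] at h5
          rw [h]
          by_contra hcon
          exact hx (h5.mpr hcon)
    rw [hset]
    rw [Set.ncard_eq_three]
    refine ⟨_, _, _, ?_, ?_, ?_, rfl⟩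
    · intro h
      exact no_small hN (k := 2) (by omega) (by omega) (by push_cast; linear_combination h)
    · intro h
      exact no_small hN (k := 6) (by omega) (by omega) (by push_cast; linear_combination h)
    · intro h
      exact no_small hN (k := 4) (by omega) (by omega) (by push_cast; linear_combination h)

lemma colorable (hN : 14 ≤ N) (hE : Even N) : (graph N hN).Colorable 2 := by
  refine ⟨SimpleGraph.Coloring.mk (fun v => ⟨v.val % 2, by omega⟩) ?_⟩
  intro v w h
  have hp := adj_parity hN hE h
  rw [Nat.even_iff, Nat.even_iff] at hp
  simp only [Ne, Fin.mk.injEq]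
  omega

def pathW (hN : 14 ≤ N) (x : ZMod N) : (k : ℕ) → (graph N hN).Walk x (x + (k : ℕ))
  | 0 => Walk.nil.copy rfl (by push_cast; ring)
  | (k+1) =>
    (Walk.cons (show (graph N hN).Adj x (x + 1) from Or.inl rfl)
      (pathW hN (x + 1) k)).copy rfl (by push_cast; ring)

lemma pathW_support (hN : 14 ≤ N) (x : ZMod N) (k : ℕ) :
    (pathW hN x k).support = (List.range (k + 1)).map (fun i => x + (i : ℕ)) := by
  induction k generalizing x with
  | zero => simp [pathW, List.range_succ]
  | succ k ih =>
    have hr : List.range (k + 1 + 1) = 0 :: (List.range (k + 1)).map Nat.succ :=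
      List.range_succ_eq_map (n := k + 1)
    rw [hr, List.map_cons, List.map_map]
    simp only [pathW, Walk.support_copy, Walk.support_cons, ih]
    congr 1
    · simp
    · refine List.map_congr_left fun i _ => ?_
      simp only [Function.comp_apply, Nat.succ_eq_add_one]
      push_cast
      ring

lemma pathW_edges (hN : 14 ≤ N) (x : ZMod N) (k : ℕ) :
    (pathW hN x k).edges = (List.range k).map (fun i => s(x + (i : ℕ), x + (i : ℕ) + 1)) := by
  induction k generalizing x with
  | zero => simp [pathW]
  | succ k ih =>
    have hr : List.range (k + 1) = 0 :: (List.range k).map Nat.succ :=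
      List.range_succ_eq_map (n := k)
    rw [hr, List.map_cons, List.map_map]
    simp only [pathW, Walk.edges_copy, Walk.edges_cons, ih]
    congr 1
    · simp
    · refine List.map_congr_left fun i _ => ?_
      simp only [Function.comp_apply, Nat.succ_eq_add_one]
      congr 1 <;> (push_cast; ring)

lemma pathW_length (hN : 14 ≤ N) (x : ZMod N) (k : ℕ) : (pathW hN x k).length = k := by
  induction k generalizing x with
  | zero => simp [pathW]
  | succ k ih => simp [pathW, ih]

lemma pathW_edges_nodup (hN : 14 ≤ N) (x : ZMod N) {k : ℕ} (hk : k ≤ N) :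
    (pathW hN x k).edges.Nodup := by
  rw [pathW_edges]
  refine List.Nodup.map_on ?_ List.nodup_range
  intro i hi j hj hij
  rw [List.mem_range] at hi hj
  rw [Sym2.eq_iff] at hij
  rcases hij with ⟨h1, -⟩ | ⟨h1, h2⟩
  · exact cast_inj hN (by omega) (by omega) (by linear_combination h1)
  · exfalso
    exact no_small hN (k := 2) (by omega) (by omega) (by push_cast; linear_combination h2 - h1)

lemma pathW_support_nodup (hN : 14 ≤ N) (x : ZMod N) {k : ℕ} (hk : k < N) :
    (pathW hN x k).support.Nodup := by
  rw [pathW_support]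
  refine List.Nodup.map_on ?_ List.nodup_range
  intro i hi j hj hij
  rw [List.mem_range] at hi hj
  exact cast_inj hN (by omega) (by omega) (by linear_combination hij)

lemma tail_shift (hN : 14 ≤ N) (k : ℕ) :
    ((List.range (k + 1)).map (fun i => (0 : ZMod N) + (i : ℕ))).tail
      = (List.range k).map (fun i => ((i + 1 : ℕ) : ZMod N)) := by
  rw [List.range_succ_eq_map (n := k), List.map_cons, List.tail_cons, List.map_map]
  refine List.map_congr_left fun i _ => ?_
  simp [Nat.succ_eq_add_one]

lemma mod_window (hN : 14 ≤ N) {a b : ℕ} (ha1 : 1 ≤ a) (ha2 : a ≤ N) (hb1 : 1 ≤ b)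
    (hb2 : b ≤ N) (h : a % N = b % N) : a = b := by
  by_cases haN : a = N
  · by_cases hbN : b = N
    · omega
    · rw [haN, Nat.mod_self, Nat.mod_eq_of_lt (by omega)] at h; omega
  · by_cases hbN : b = N
    · rw [hbN, Nat.mod_self, Nat.mod_eq_of_lt (by omega)] at h; omega
    · rw [Nat.mod_eq_of_lt (by omega), Nat.mod_eq_of_lt (by omega)] at h; omega

lemma shift_nodup (hN : 14 ≤ N) {k : ℕ} (hk : k ≤ N) :
    ((List.range k).map (fun i => ((i + 1 : ℕ) : ZMod N))).Nodup := by
  refine List.Nodup.map_on ?_ List.nodup_range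
  intro i hi j hj hij
  rw [List.mem_range] at hi hj
  rw [ZMod.natCast_eq_natCast_iff'] at hij
  have := mod_window hN (a := i + 1) (b := j + 1) (by omega) (by omega) (by omega) (by omega) hij
  omega

lemma ham_tail_count (hN : 14 ≤ N) (v : ZMod N) :
    ((pathW hN (0 : ZMod N) N).support.tail).count v = 1 := by
  haveI : NeZero N := ⟨by omega⟩
  rw [pathW_support, tail_shift hN]
  apply List.count_eq_one_of_mem (shift_nodup hN le_rfl)
  rcases eq_or_ne v 0 with rfl | hv
  · exact List.mem_map.mpr ⟨N - 1, List.mem_range.mpr (by omega),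
      by rw [Nat.sub_add_cancel (by omega)]; exact ZMod.natCast_self N⟩
  · have hvpos : 0 < v.val := by
      rcases Nat.eq_zero_or_pos v.val with h0 | h0
      · exact absurd ((ZMod.val_eq_zero v).mp h0) hv
      · exact h0
    refine List.mem_map.mpr ⟨v.val - 1, List.mem_range.mpr ?_, ?_⟩
    · have := v.val_lt; omega
    · rw [Nat.sub_add_cancel hvpos]; exact ZMod.natCast_zmod_val v

def hamCycle (hN : 14 ≤ N) : (graph N hN).Walk (0 : ZMod N) (0 : ZMod N) :=
  (pathW hN 0 N).copy rfl (by rw [ZMod.natCast_self, add_zero])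

lemma hamCycle_isHam (hN : 14 ≤ N) : (hamCycle hN).IsHamiltonianCycle := by
  haveI : NeZero N := ⟨by omega⟩
  rw [Walk.isHamiltonianCycle_iff_isCycle_and_support_count_tail_eq_one]
  constructor
  · refine ⟨⟨⟨?_⟩, ?_⟩, ?_⟩
    · rw [hamCycle, Walk.edges_copy]
      exact pathW_edges_nodup hN 0 le_rfl
    · intro h
      have := congrArg Walk.length h
      rw [hamCycle, Walk.length_copy, pathW_length, Walk.length_nil] at this
      omega
    · rw [hamCycle, Walk.support_copy]
      refine List.nodup_iff_count_le_one.mpr fun a => le_of_eq (ham_tail_count hN a)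
  · intro a
    rw [hamCycle, Walk.support_copy]
    exact ham_tail_count hN a

lemma chordAdj (hN : 14 ≤ N) : (graph N hN).Adj ((0 : ZMod N) + ((5 : ℕ) : ZMod N)) 0 := by
  haveI : NeZero N := ⟨by omega⟩
  refine Or.inr (Or.inr (Or.inr ⟨?_, by push_cast; ring⟩))
  rw [ZMod.val_zero]
  exact ⟨0, rfl⟩

def sixCycle (hN : 14 ≤ N) : (graph N hN).Walk (0 : ZMod N) (0 : ZMod N) :=
  (pathW hN 0 5).concat (chordAdj hN)

lemma sixCycle_length (hN : 14 ≤ N) : (sixCycle hN).length = 6 := by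
  rw [sixCycle, Walk.length_concat, pathW_length]

lemma sixCycle_isCycle (hN : 14 ≤ N) : (sixCycle hN).IsCycle := by
  haveI : NeZero N := ⟨by omega⟩
  refine ⟨⟨⟨?_⟩, ?_⟩, ?_⟩
  · rw [sixCycle, Walk.edges_concat, List.concat_eq_append]
    rw [List.nodup_append]
    refine ⟨pathW_edges_nodup hN 0 (by omega), List.nodup_singleton _, ?_⟩
    intro e he f he' rfl
    rw [List.mem_singleton] at he'
    subst he'
    rw [pathW_edges, List.mem_map] at he
    obtain ⟨i, hi, hfi⟩ := he
    rw [List.mem_range] at hi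
    rw [Sym2.eq_iff] at hfi
    rcases hfi with ⟨h1, h2⟩ | ⟨h1, h2⟩
    · exact no_small hN (k := i + 1) (by omega) (by omega) (by push_cast; linear_combination h2)
    · exact no_small hN (k := 4) (by omega) (by omega)
        (by push_cast; linear_combination h1 - h2)
  · intro h
    have := congrArg Walk.length h
    rw [sixCycle_length, Walk.length_nil] at this
    omega
  · rw [sixCycle, Walk.support_concat]
    have hsup : (pathW hN (0 : ZMod N) 5).support
        = (0 : ZMod N) :: (List.range 5).map (fun i => ((i + 1 : ℕ) : ZMod N)) := by
      rw [pathW_support, List.range_succ_eq_map (n := 5), List.map_cons, List.map_map]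
      congr 1
      · simp
      · refine List.map_congr_left fun i _ => ?_
        simp [Nat.succ_eq_add_one]
    rw [hsup, List.cons_append, List.tail_cons, List.nodup_append]
    refine ⟨shift_nodup hN (by omega), List.nodup_singleton _, ?_⟩
    intro a ha b ha' rfl
    rw [List.mem_singleton] at ha'
    subst ha'
    rw [List.mem_map] at ha
    obtain ⟨i, hi, hfi⟩ := ha
    rw [List.mem_range] at hi
    exact no_small hN (k := i + 1) (by omega) (by omega) hfi

lemma walk_parity (hN : 14 ≤ N) (hE : Even N) {u v : ZMod N} (p : (graph N hN).Walk u v) :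
    Even p.length ↔ (Even u.val ↔ Even v.val) := by
  induction p with
  | nil => simp
  | @cons a b c h q ih =>
    have hab : Even b.val ↔ ¬ Even a.val := adj_parity hN hE h
    rw [Walk.length_cons, Nat.even_add_one, ih]
    tauto

set_option maxHeartbeats 1000000 in
lemma no4 (hN : 14 ≤ N) (hE : Even N) {v b c d : ZMod N}
    (h1 : Adjacent N v b) (h2 : Adjacent N b c) (h3 : Adjacent N c d) (h4 : Adjacent N d v)
    (hvc : v ≠ c) (hbd : b ≠ d) : False := by
  haveI : NeZero N := ⟨by omega⟩
  obtain ⟨k1, e1, m1, f1, g1⟩ := step hN hE h1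
  obtain ⟨k2, e2, m2, f2, g2⟩ := step hN hE h2
  obtain ⟨k3, e3, m3, f3, g3⟩ := step hN hE h3
  obtain ⟨k4, e4, m4, f4, g4⟩ := step hN hE h4
  have p1 := adj_parity hN hE h1
  have p2 := adj_parity hN hE h2
  have p3 := adj_parity hN hE h3
  have hA : k1 + k2 ≠ 0 := by
    intro h0
    apply hvc
    have hca : c = v + ((k1 + k2 : ℤ) : ZMod N) := by rw [e2, e1]; push_cast; ring
    rw [h0] at hca
    simpa using hca.symm
  have hB : k2 + k3 ≠ 0 := by
    intro h0
    apply hbd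
    have hdb : d = b + ((k2 + k3 : ℤ) : ZMod N) := by rw [e3, e2]; push_cast; ring
    rw [h0] at hdb
    simpa using hdb.symm
  have hS : ((k1 + k2 + k3 + k4 : ℤ) : ZMod N) = 0 := by
    have hv : v = d + (k4 : ZMod N) := e4
    rw [e3, e2, e1] at hv
    push_cast
    linear_combination -hv
  rw [ZMod.intCast_zmod_eq_zero_iff_dvd] at hS
  have hs' : k1 + k2 + k3 + k4 = 0 ∨ 14 ≤ k1 + k2 + k3 + k4 ∨ k1 + k2 + k3 + k4 ≤ -14 := by
    rcases eq_or_ne (k1 + k2 + k3 + k4) 0 with h | h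
    · exact Or.inl h
    · have hd : N ∣ (k1 + k2 + k3 + k4).natAbs := by
        simpa using Int.natAbs_dvd_natAbs.mpr hS
      have := Nat.le_of_dvd (Int.natAbs_pos.mpr h) hd
      omega
  by_cases hP : Even v.val
  · have hb : ¬ Even b.val := fun h => (p1.mp h) hP
    have hc : Even c.val := p2.mpr hb
    have hd : ¬ Even d.val := fun h => (p3.mp h) hc
    have m1' : k1 = 1 ∨ k1 = -1 ∨ k1 = 5 := by
      rcases m1 with h | h | h | h
      · exact Or.inl h
      · exact Or.inr (Or.inl h)
      · exact Or.inr (Or.inr h)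
      · exact absurd hP (g1 h)
    have m2' : k2 = 1 ∨ k2 = -1 ∨ k2 = -5 := by
      rcases m2 with h | h | h | h
      · exact Or.inl h
      · exact Or.inr (Or.inl h)
      · exact absurd (f2 h) hb
      · exact Or.inr (Or.inr h)
    have m3' : k3 = 1 ∨ k3 = -1 ∨ k3 = 5 := by
      rcases m3 with h | h | h | h
      · exact Or.inl h
      · exact Or.inr (Or.inl h)
      · exact Or.inr (Or.inr h)
      · exact absurd hc (g3 h)
    have m4' : k4 = 1 ∨ k4 = -1 ∨ k4 = -5 := by
      rcases m4 with h | h | h | h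
      · exact Or.inl h
      · exact Or.inr (Or.inl h)
      · exact absurd (f4 h) hd
      · exact Or.inr (Or.inr h)
    omega
  · have hb : Even b.val := p1.mpr hP
    have hc : ¬ Even c.val := fun h => (p2.mp h) hb
    have hd : Even d.val := p3.mpr hc
    have m1' : k1 = 1 ∨ k1 = -1 ∨ k1 = -5 := by
      rcases m1 with h | h | h | h
      · exact Or.inl h
      · exact Or.inr (Or.inl h)
      · exact absurd (f1 h) hP
      · exact Or.inr (Or.inr h)
    have m2' : k2 = 1 ∨ k2 = -1 ∨ k2 = 5 := by
      rcases m2 with h | h | h | h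
      · exact Or.inl h
      · exact Or.inr (Or.inl h)
      · exact Or.inr (Or.inr h)
      · exact absurd hb (g2 h)
    have m3' : k3 = 1 ∨ k3 = -1 ∨ k3 = -5 := by
      rcases m3 with h | h | h | h
      · exact Or.inl h
      · exact Or.inr (Or.inl h)
      · exact absurd (f3 h) hc
      · exact Or.inr (Or.inr h)
    have m4' : k4 = 1 ∨ k4 = -1 ∨ k4 = 5 := by
      rcases m4 with h | h | h | h
      · exact Or.inl h
      · exact Or.inr (Or.inl h)
      · exact Or.inr (Or.inr h)
      · exact absurd hd (g4 h)
    omega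

lemma cycle4 (hN : 14 ≤ N) (hE : Even N) {v : ZMod N} (w : (graph N hN).Walk v v)
    (hc : w.IsCycle) (hl : w.length = 4) : False := by
  cases w with
  | nil => simp at hl
  | cons h1 q =>
    rename_i b
    cases q with
    | nil => simp at hl
    | cons h2 r =>
      rename_i c
      cases r with
      | nil => simp at hl
      | cons h3 s =>
        rename_i d
        cases s with
        | nil => simp at hl
        | cons h4 t =>
          rename_i e
          cases t with
          | cons h5 u => simp [Walk.length_cons] at hl
          | nil =>
            have hnd := hc.support_nodup
            simp only [Walk.support_cons, Walk.support_nil, List.tail_cons] at hnd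
            rw [List.nodup_cons, List.nodup_cons, List.nodup_cons] at hnd
            simp only [List.mem_cons, List.mem_singleton, List.not_mem_nil] at hnd
            exact no4 hN hE h1 h2 h3 h4
              (fun hvc => hnd.2.1 (Or.inr (Or.inl hvc.symm)))
              (fun hbd => hnd.1 (Or.inr (Or.inl hbd)))

lemma girth_eq (hN : 14 ≤ N) (hE : Even N) : (graph N hN).egirth = 6 := by
  apply le_antisymm
  · have hle : (graph N hN).egirth ≤ ((sixCycle hN).length : ℕ∞) := by
      rw [SimpleGraph.egirth]
      exact iInf_le_of_le 0 (iInf_le_of_le (sixCycle hN)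
        (iInf_le_of_le (sixCycle_isCycle hN) le_rfl))
    rw [sixCycle_length] at hle
    exact_mod_cast hle
  · rw [le_egirth]
    intro a w hw
    have h3 := hw.three_le_length
    have hev : Even w.length := (walk_parity hN hE w).mpr Iff.rfl
    have h4 : w.length ≠ 4 := fun h => cycle4 hN hE w hw h
    rw [Nat.even_iff] at hev
    have h6 : 6 ≤ w.length := by omega
    exact_mod_cast Nat.cast_le.mpr h6

end HamB3

/-- For every even integer `n ≥ 14` there exists a `(3, 6)` Hamiltonian bipartite graph of
order `n`. -/
theorem stmt_6 (n : ℕ) (hn : 14 ≤ n) (heven : Even n) :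
    ∃ G : SimpleGraph (Fin n), IsHamBipartite3 n 6 G := by
  obtain ⟨m, rfl⟩ : ∃ m, n = m + 1 := ⟨n - 1, by omega⟩
  have hN : 14 ≤ m + 1 := hn
  refine ⟨HamB3.graph (m + 1) hN, HamB3.degree hN heven, HamB3.colorable hN heven,
    ⟨(0 : ZMod (m + 1)), HamB3.hamCycle hN, HamB3.hamCycle_isHam hN⟩, ?_⟩
  refine (HamB3.girth_eq hN heven).trans ?_
  norm_num
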